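/- The set B(p) of complex symmetric Minkowski-traceless 4×4 matrices transverse to a fixed future-pointing lightlike vector p, quotiented by its subspace of matrices of zero Minkowski pseudo-norm (i.e. those of the form p_ρf_σ + p_σf_ρ with p^ρf_ρ = 0), is a complex vector space of dimension 2 on which the induced sesquilinear form (h,h') = conj(h^{μν})h'_{μν} is a positive definite inner product. -/

import Mathlib

open Matrix
noncomputable section

def gM : Matrix (Fin 4) (Fin 4) ℂ := Matrix.diagonal ![1,-1,-1,-1]

def pc (p : Fin 4 → ℝ) : Fin 4 → ℂ := fun i => (p i : ℂ)

def minkR (p q : Fin 4 → ℝ) : ℝ := p 0 * q 0 - p 1 * q 1 - p 2 * q 2 - p 3 * q 3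

def IsTraceless (h : Matrix (Fin 4) (Fin 4) ℂ) : Prop :=
  ∑ ρ, ∑ σ, gM ρ σ * h ρ σ = 0

def IsTransverse (p : Fin 4 → ℝ) (h : Matrix (Fin 4) (Fin 4) ℂ) : Prop :=
  ∀ ρ, ∑ σ, ∑ l, h ρ σ * gM σ l * pc p l = 0

def raise (h : Matrix (Fin 4) (Fin 4) ℂ) : Matrix (Fin 4) (Fin 4) ℂ := gM * h * gM

def pnorm (h : Matrix (Fin 4) (Fin 4) ℂ) : ℂ := ∑ μ, ∑ ν, star (raise h μ ν) * h μ ν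

def Bsub (p : Fin 4 → ℝ) : Submodule ℂ (Matrix (Fin 4) (Fin 4) ℂ) where
  carrier := {h | h.IsSymm ∧ IsTraceless h ∧ IsTransverse p h}
  zero_mem' := by
    refine ⟨Matrix.isSymm_zero, ?_, fun ρ => ?_⟩ <;>
      simp [IsTraceless, IsTransverse]
  add_mem' := by
    rintro a b ⟨ha1, ha2, ha3⟩ ⟨hb1, hb2, hb3⟩
    refine ⟨ha1.add hb1, ?_, fun ρ => ?_⟩
    · simpa [IsTraceless, Matrix.add_apply, mul_add, Finset.sum_add_distrib] using
        congrArg₂ (· + ·) ha2 hb2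
    · simpa [Matrix.add_apply, add_mul, Finset.sum_add_distrib] using
        congrArg₂ (· + ·) (ha3 ρ) (hb3 ρ)
  smul_mem' := by
    rintro c a ⟨ha1, ha2, ha3⟩
    refine ⟨?_, ?_, fun ρ => ?_⟩
    · rw [Matrix.IsSymm, Matrix.transpose_smul, ha1]
    · have := congrArg (c * ·) ha2
      simpa [IsTraceless, Matrix.smul_apply, Finset.mul_sum, smul_eq_mul, mul_left_comm] using this
    · have := congrArg (c * ·) (ha3 ρ)
      simpa [Matrix.smul_apply, Finset.mul_sum, smul_eq_mul, mul_assoc, mul_left_comm] using this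

def B0sub (p : Fin 4 → ℝ) : Submodule ℂ (Matrix (Fin 4) (Fin 4) ℂ) where
  carrier := {h | ∃ f : Fin 4 → ℂ,
    (∑ ρ, ∑ σ, gM ρ σ * pc p σ * f ρ) = 0 ∧
    ∀ ρ σ, h ρ σ = pc p ρ * f σ + pc p σ * f ρ}
  zero_mem' := ⟨0, by simp, by simp⟩
  add_mem' := by
    rintro a b ⟨f, hf1, hf2⟩ ⟨f', hf'1, hf'2⟩
    refine ⟨f + f', ?_, fun ρ σ => ?_⟩
    · simpa [mul_add, Finset.sum_add_distrib] using congrArg₂ (· + ·) hf1 hf'1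
    · simp [Matrix.add_apply, hf2 ρ σ, hf'2 ρ σ]; ring
  smul_mem' := by
    rintro c a ⟨f, hf1, hf2⟩
    refine ⟨c • f, ?_, fun ρ σ => ?_⟩
    · have := congrArg (c * ·) hf1
      simpa [Pi.smul_apply, smul_eq_mul, Finset.mul_sum, mul_assoc, mul_left_comm] using this
    · simp [Matrix.smul_apply, hf2 ρ σ, Pi.smul_apply, smul_eq_mul]; ring

def pform (a b : Matrix (Fin 4) (Fin 4) ℂ) : ℂ := ∑ μ, ∑ ν, star (raise a μ ν) * b μ ν

namespace Stmt6Aux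

def gd : Fin 4 → ℂ := ![1,-1,-1,-1]

lemma gM_apply (i j : Fin 4) : gM i j = if i = j then gd i else 0 :=
  Matrix.diagonal_apply _ i j

lemma gd_vals : gd 0 = 1 ∧ gd 1 = -1 ∧ gd 2 = -1 ∧ gd 3 = -1 := by
  refine ⟨rfl, rfl, rfl, rfl⟩

lemma star_gd (μ : Fin 4) : star (gd μ) = gd μ := by
  fin_cases μ <;> simp [gd]

lemma gd_ite (μ : Fin 4) : gd μ = 2 * (if μ = 0 then 1 else 0) - 1 := by
  fin_cases μ <;> simp [gd] <;> norm_num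

lemma raise_apply (h : Matrix (Fin 4) (Fin 4) ℂ) (μ ν : Fin 4) :
    raise h μ ν = gd μ * gd ν * h μ ν := by
  simp only [raise, Matrix.mul_apply, gM_apply, ite_mul, zero_mul, mul_ite, mul_zero,
    Finset.sum_ite_eq, Finset.mem_univ, if_true]
  rw [Finset.sum_ite_eq' Finset.univ ν]
  simp [mul_comm, mul_left_comm, mul_assoc]

def kap (w : Fin 4 → Fin 4 → ℂ) (h : Matrix (Fin 4) (Fin 4) ℂ) (α β : Fin 4) : ℂ :=
  ∑ μ, ∑ ν, w α μ * w β ν * h μ ν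

section

variable (w : Fin 4 → Fin 4 → ℂ)

lemma contract (hcompC : ∀ μ ν, (∑ α, w α μ * w α ν) = if μ = ν then 1 else 0)
    (x : Fin 4 → ℂ) (i : Fin 4) : (∑ α, (∑ l, w α l * x l) * w α i) = x i := by
  calc (∑ α, (∑ l, w α l * x l) * w α i)
      = ∑ α, ∑ l, (w α i * w α l) * x l := by
        refine Finset.sum_congr rfl fun α _ => ?_
        rw [Finset.sum_mul]
        exact Finset.sum_congr rfl fun l _ => by ring
    _ = ∑ l, (∑ α, w α i * w α l) * x l := by
        rw [Finset.sum_comm]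
        exact Finset.sum_congr rfl fun l _ => (Finset.sum_mul _ _ _).symm
    _ = x i := by simp [hcompC, ite_mul, Finset.sum_ite_eq]

lemma decomp (hcompC : ∀ μ ν, (∑ α, w α μ * w α ν) = if μ = ν then 1 else 0)
    (h : Matrix (Fin 4) (Fin 4) ℂ) (μ ν : Fin 4) :
    h μ ν = ∑ α, ∑ β, kap w h α β * (w α μ * w β ν) := by
  have h1 : ∀ l, (∑ β, (∑ m, w β m * h l m) * w β ν) = h l ν := fun l =>
    contract w hcompC (fun m => h l m) ν
  have h2 : (∑ α, (∑ l, w α l * h l ν) * w α μ) = h μ ν :=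
    contract w hcompC (fun l => h l ν) μ
  rw [← h2]
  refine (Finset.sum_congr rfl fun α _ => ?_).symm
  rw [show (∑ l, w α l * h l ν) = ∑ l, w α l * (∑ β, (∑ m, w β m * h l m) * w β ν) from
    Finset.sum_congr rfl fun l _ => by rw [h1 l]]
  simp only [kap, Fin.sum_univ_four]
  ring

lemma hmink (horthC : ∀ α β, (∑ μ, w α μ * w β μ) = if α = β then 1 else 0)
    (htimeC : ∀ α, w α 0 = if α = 0 then 1 else 0) (α β : Fin 4) :
    (∑ μ, gd μ * (w α μ * w β μ)) = (if α = 0 then 1 else -1) * (if α = β then 1 else 0) := by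
  have step : (∑ μ, gd μ * (w α μ * w β μ))
      = 2 * (w α 0 * w β 0) - ∑ μ, w α μ * w β μ := by
    simp only [Fin.sum_univ_four]
    simp only [gd, Matrix.cons_val_zero, Matrix.cons_val_one, Matrix.head_cons,
      Matrix.cons_val_two, Matrix.tail_cons, Matrix.cons_val_three]
    ring
  rw [step, htimeC α, htimeC β, horthC α β]
  by_cases hα : α = 0 <;> by_cases hβ : β = 0 <;> by_cases hαβ : α = β <;>
    simp_all <;> ring

end

end Stmt6Aux
namespace Stmt6Aux

section

variable (w : Fin 4 → Fin 4 → ℂ)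

lemma kap_R1 (h : Matrix (Fin 4) (Fin 4) ℂ) (hs : h.IsSymm) (α β : Fin 4) :
    kap w h α β = kap w h β α := by
  unfold kap; rw [Finset.sum_comm]
  exact Finset.sum_congr rfl fun x _ => Finset.sum_congr rfl fun y _ => by
    rw [hs.apply x y]; ring

lemma kap_R2 (h : Matrix (Fin 4) (Fin 4) ℂ)
    (htvb : ∀ ρ, (∑ σ, h ρ σ * (w 0 σ - w 1 σ)) = 0) (α : Fin 4) :
    kap w h α 0 = kap w h α 1 := by
  have key : kap w h α 0 - kap w h α 1 = ∑ μ, w α μ * (∑ σ, h μ σ * (w 0 σ - w 1 σ)) := by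
    simp only [kap, Fin.sum_univ_four]; ring
  have z : kap w h α 0 - kap w h α 1 = 0 := by rw [key]; simp [htvb]
  exact sub_eq_zero.mp z

lemma trace_basis (hcompC : ∀ μ ν, (∑ α, w α μ * w α ν) = if μ = ν then 1 else 0)
    (horthC : ∀ α β, (∑ μ, w α μ * w β μ) = if α = β then 1 else 0)
    (htimeC : ∀ α, w α 0 = if α = 0 then 1 else 0)
    (h : Matrix (Fin 4) (Fin 4) ℂ) :
    (∑ ρ, gd ρ * h ρ ρ) = kap w h 0 0 - kap w h 1 1 - kap w h 2 2 - kap w h 3 3 := by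
  calc (∑ ρ, gd ρ * h ρ ρ)
      = ∑ ρ, gd ρ * (∑ γ, ∑ δ, kap w h γ δ * (w γ ρ * w δ ρ)) :=
        Finset.sum_congr rfl fun ρ _ => by rw [decomp w hcompC h ρ ρ]
    _ = ∑ γ, ∑ δ, kap w h γ δ * (∑ ρ, gd ρ * (w γ ρ * w δ ρ)) := by
        simp only [Fin.sum_univ_four]; ring
    _ = ∑ γ, ∑ δ, kap w h γ δ * ((if γ = 0 then 1 else -1) * (if γ = δ then 1 else 0)) :=
        Finset.sum_congr rfl fun γ _ => Finset.sum_congr rfl fun δ _ => by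
          rw [hmink w horthC htimeC γ δ]
    _ = kap w h 0 0 - kap w h 1 1 - kap w h 2 2 - kap w h 3 3 := by
        simp [Fin.sum_univ_four]; ring

lemma kap_gd (hcompC : ∀ μ ν, (∑ α, w α μ * w α ν) = if μ = ν then 1 else 0)
    (horthC : ∀ α β, (∑ μ, w α μ * w β μ) = if α = β then 1 else 0)
    (htimeC : ∀ α, w α 0 = if α = 0 then 1 else 0)
    (h : Matrix (Fin 4) (Fin 4) ℂ) (α β : Fin 4) :
    (∑ μ, ∑ ν, (gd μ * w α μ) * ((gd ν * w β ν) * h μ ν))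
      = (if α = 0 then 1 else -1) * ((if β = 0 then 1 else -1) * kap w h α β) := by
  calc (∑ μ, ∑ ν, (gd μ * w α μ) * ((gd ν * w β ν) * h μ ν))
      = ∑ μ, ∑ ν, (gd μ * w α μ) * ((gd ν * w β ν) *
          (∑ γ, ∑ δ, kap w h γ δ * (w γ μ * w δ ν))) :=
        Finset.sum_congr rfl fun μ _ => Finset.sum_congr rfl fun ν _ => by
          rw [← decomp w hcompC h μ ν]
    _ = ∑ γ, ∑ δ, kap w h γ δ *
          ((∑ μ, gd μ * (w α μ * w γ μ)) * (∑ ν, gd ν * (w β ν * w δ ν))) := by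
        simp only [Fin.sum_univ_four]; ring
    _ = ∑ γ, ∑ δ, kap w h γ δ *
          (((if α = 0 then 1 else -1) * (if α = γ then 1 else 0)) *
           ((if β = 0 then 1 else -1) * (if β = δ then 1 else 0))) :=
        Finset.sum_congr rfl fun γ _ => Finset.sum_congr rfl fun δ _ => by
          rw [hmink w horthC htimeC α γ, hmink w horthC htimeC β δ]
    _ = (if α = 0 then 1 else -1) * ((if β = 0 then 1 else -1) * kap w h α β) := by
        fin_cases α <;> fin_cases β <;> simp [Fin.sum_univ_four]

lemma kap_outer (horthC : ∀ α β, (∑ μ, w α μ * w β μ) = if α = β then 1 else 0)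
    (a b α β : Fin 4) :
    kap w (Matrix.of fun μ ν => w a μ * w b ν) α β
      = (if α = a then 1 else 0) * (if β = b then 1 else 0) := by
  have : kap w (Matrix.of fun μ ν => w a μ * w b ν) α β
      = (∑ μ, w α μ * w a μ) * (∑ ν, w β ν * w b ν) := by
    simp only [kap, Matrix.of_apply, Fin.sum_univ_four]; ring
  rw [this, horthC α a, horthC β b]

lemma kap_conj (hreal : ∀ α μ, star (w α μ) = w α μ)
    (h : Matrix (Fin 4) (Fin 4) ℂ) (α β : Fin 4) :
    kap w (Matrix.of fun μ ν => star (h μ ν)) α β = star (kap w h α β) := by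
  simp only [kap, Matrix.of_apply, Fin.sum_univ_four, star_add, star_mul', hreal]

variable (p : Fin 4 → ℝ)

lemma transv_diag (A : Matrix (Fin 4) (Fin 4) ℂ) (ρ : Fin 4) :
    (∑ σ, ∑ l, A ρ σ * gM σ l * pc p l) = ∑ σ, A ρ σ * (gd σ * pc p σ) := by
  simp only [Fin.sum_univ_four]
  simp (config := { decide := true }) [gM, Matrix.diagonal_apply, gd]

lemma trace_diag (A : Matrix (Fin 4) (Fin 4) ℂ) :
    (∑ ρ, ∑ σ, gM ρ σ * A ρ σ) = ∑ ρ, gd ρ * A ρ ρ := by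
  simp only [Fin.sum_univ_four]
  simp (config := { decide := true }) [gM, Matrix.diagonal_apply, gd]

lemma gd_ne {σ : Fin 4} (hσ : σ ≠ 0) : gd σ = -1 := by
  fin_cases σ <;> simp_all [gd]

lemma hgdp (hT : ∀ μ, w 0 μ = if μ = 0 then 1 else 0)
    (htimeC : ∀ α, w α 0 = if α = 0 then 1 else 0)
    (hpw : ∀ μ, pc p μ = (p 0 : ℂ) * (w 0 μ + w 1 μ)) (σ : Fin 4) :
    gd σ * pc p σ = (p 0 : ℂ) * (w 0 σ - w 1 σ) := by
  by_cases hσ : σ = 0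
  · subst hσ
    rw [hpw 0, show w 0 0 = 1 by simpa using hT 0, show w 1 0 = 0 by simpa using htimeC 1]
    simp [gd]
  · rw [hpw σ, show w 0 σ = 0 by simp [hT σ, hσ], gd_ne hσ]
    ring

end

end Stmt6Aux
namespace Stmt6Aux

section

variable (w : Fin 4 → Fin 4 → ℂ) (p : Fin 4 → ℝ)

lemma sumB0 (a : Matrix (Fin 4) (Fin 4) ℂ) (f : Fin 4 → ℂ)
    (hsym : a.IsSymm) (htv : IsTransverse p a) :
    (∑ μ, ∑ ν, (gd μ * gd ν * star (a μ ν)) * (pc p μ * f ν + pc p ν * f μ)) = 0 := by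
  have ta : ∀ ρ, (∑ σ, a ρ σ * (gd σ * pc p σ)) = 0 := fun ρ => by
    rw [← transv_diag p a ρ]; exact htv ρ
  have ca : ∀ ρ, (∑ σ, star (a ρ σ) * (gd σ * pc p σ)) = 0 := fun ρ => by
    have := congrArg star (ta ρ)
    simp only [Fin.sum_univ_four, star_add, star_mul', star_gd, star_zero] at this
    simp only [Fin.sum_univ_four]
    simp only [pc, Complex.star_def, Complex.conj_ofReal] at this ⊢
    linear_combination this
  have ca0 := ca 0; have ca1 := ca 1; have ca2 := ca 2; have ca3 := ca 3
  simp only [Fin.sum_univ_four] at ca0 ca1 ca2 ca3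
  simp only [Fin.sum_univ_four]
  simp only [hsym.apply 0 1, hsym.apply 0 2, hsym.apply 0 3, hsym.apply 1 2,
    hsym.apply 1 3, hsym.apply 2 3] at ca0 ca1 ca2 ca3 ⊢
  linear_combination 2*gd 0*f 0*ca0 + 2*gd 1*f 1*ca1 + 2*gd 2*f 2*ca2 + 2*gd 3*f 3*ca3

lemma pform_B0 (a c : Matrix (Fin 4) (Fin 4) ℂ) (f : Fin 4 → ℂ)
    (hsym : a.IsSymm) (htv : IsTransverse p a)
    (hc : ∀ ρ σ, c ρ σ = pc p ρ * f σ + pc p σ * f ρ) :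
    pform a c = 0 := by
  have step1 : pform a c
      = ∑ μ, ∑ ν, (gd μ * gd ν * star (a μ ν)) * (pc p μ * f ν + pc p ν * f μ) := by
    simp only [pform]
    refine Finset.sum_congr rfl fun μ _ => Finset.sum_congr rfl fun ν _ => ?_
    rw [raise_apply, hc μ ν]
    simp only [star_mul', star_gd]
  rw [step1]
  exact sumB0 p a f hsym htv

lemma htvb (hT : ∀ μ, w 0 μ = if μ = 0 then 1 else 0)
    (htimeC : ∀ α, w α 0 = if α = 0 then 1 else 0)
    (hpw : ∀ μ, pc p μ = (p 0 : ℂ) * (w 0 μ + w 1 μ)) (hp0 : 0 < p 0)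
    (h : Matrix (Fin 4) (Fin 4) ℂ) (htv : IsTransverse p h) :
    ∀ ρ, (∑ σ, h ρ σ * (w 0 σ - w 1 σ)) = 0 := by
  intro ρ
  have t0 : (∑ σ, h ρ σ * (gd σ * pc p σ)) = 0 := by
    rw [← transv_diag p h ρ]; exact htv ρ
  have t1 : (∑ σ, h ρ σ * ((p 0 : ℂ) * (w 0 σ - w 1 σ))) = 0 := by
    rw [Finset.sum_congr rfl fun σ _ => by rw [← hgdp w p hT htimeC hpw σ]]
    exact t0
  have t2 : (p 0 : ℂ) * (∑ σ, h ρ σ * (w 0 σ - w 1 σ)) = 0 := by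
    have e : (p 0 : ℂ) * (∑ σ, h ρ σ * (w 0 σ - w 1 σ))
        = ∑ σ, h ρ σ * ((p 0 : ℂ) * (w 0 σ - w 1 σ)) := by
      rw [Finset.mul_sum]; exact Finset.sum_congr rfl fun σ _ => by ring
    rw [e]; exact t1
  exact (mul_eq_zero.mp t2).resolve_left (Complex.ofReal_ne_zero.mpr hp0.ne')

/-- candidate vector `f` for B₀ membership -/
def Ff (h : Matrix (Fin 4) (Fin 4) ℂ) : Fin 4 → ℂ := fun μ =>
  kap w h 0 0 / (2 * (p 0 : ℂ)) * (w 0 μ + w 1 μ)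
    + kap w h 2 0 / (p 0 : ℂ) * w 2 μ + kap w h 3 0 / (p 0 : ℂ) * w 3 μ

lemma hdec
    (horthC : ∀ α β, (∑ μ, w α μ * w β μ) = if α = β then 1 else 0)
    (hcompC : ∀ μ ν, (∑ α, w α μ * w α ν) = if μ = ν then 1 else 0)
    (htimeC : ∀ α, w α 0 = if α = 0 then 1 else 0)
    (hT : ∀ μ, w 0 μ = if μ = 0 then 1 else 0)
    (hpw : ∀ μ, pc p μ = (p 0 : ℂ) * (w 0 μ + w 1 μ)) (hp0 : 0 < p 0)
    (h : Matrix (Fin 4) (Fin 4) ℂ) (hmem : h ∈ Bsub p) (μ ν : Fin 4) :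
    h μ ν = pc p μ * Ff w p h ν + pc p ν * Ff w p h μ
      + kap w h 2 2 * (w 2 μ * w 2 ν - w 3 μ * w 3 ν)
      + kap w h 2 3 * (w 2 μ * w 3 ν + w 3 μ * w 2 ν) := by
  obtain ⟨hs, htr, htv⟩ := hmem
  have tb := htvb w p hT htimeC hpw hp0 h htv
  have e01 : kap w h 0 1 = kap w h 0 0 := (kap_R2 w h tb 0).symm
  have e10 : kap w h 1 0 = kap w h 0 0 := by rw [kap_R1 w h hs 1 0, e01]
  have e11 : kap w h 1 1 = kap w h 0 0 := by rw [← kap_R2 w h tb 1, e10]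
  have e02 : kap w h 0 2 = kap w h 2 0 := kap_R1 w h hs 0 2
  have e21 : kap w h 2 1 = kap w h 2 0 := (kap_R2 w h tb 2).symm
  have e12 : kap w h 1 2 = kap w h 2 0 := by rw [kap_R1 w h hs 1 2, e21]
  have e03 : kap w h 0 3 = kap w h 3 0 := kap_R1 w h hs 0 3
  have e31 : kap w h 3 1 = kap w h 3 0 := (kap_R2 w h tb 3).symm
  have e13 : kap w h 1 3 = kap w h 3 0 := by rw [kap_R1 w h hs 1 3, e31]
  have e32 : kap w h 3 2 = kap w h 2 3 := kap_R1 w h hs 3 2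
  have tr0 : (∑ ρ, gd ρ * h ρ ρ) = 0 := by rw [← trace_diag h]; exact htr
  have e33 : kap w h 3 3 = -(kap w h 2 2) := by
    have tb' := trace_basis w hcompC horthC htimeC h
    rw [tr0] at tb'
    linear_combination tb' - e11
  have hp0c : ((p 0 : ℝ) : ℂ) ≠ 0 := Complex.ofReal_ne_zero.mpr hp0.ne'
  rw [decomp w hcompC h μ ν]
  simp only [Fin.sum_univ_four]
  rw [e01, e10, e11, e02, e21, e12, e03, e31, e13, e32, e33, hpw μ, hpw ν]
  simp only [Ff]
  field_simp
  ring

end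

end Stmt6Aux
namespace Stmt6Aux

section

variable (w : Fin 4 → Fin 4 → ℂ) (p : Fin 4 → ℝ)

lemma e33lem
    (horthC : ∀ α β, (∑ μ, w α μ * w β μ) = if α = β then 1 else 0)
    (hcompC : ∀ μ ν, (∑ α, w α μ * w α ν) = if μ = ν then 1 else 0)
    (htimeC : ∀ α, w α 0 = if α = 0 then 1 else 0)
    (hT : ∀ μ, w 0 μ = if μ = 0 then 1 else 0)
    (hpw : ∀ μ, pc p μ = (p 0 : ℂ) * (w 0 μ + w 1 μ)) (hp0 : 0 < p 0)
    (h : Matrix (Fin 4) (Fin 4) ℂ) (hmem : h ∈ Bsub p) :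
    kap w h 3 2 = kap w h 2 3 ∧ kap w h 3 3 = -(kap w h 2 2) := by
  obtain ⟨hs, htr, htv⟩ := hmem
  have tb := htvb w p hT htimeC hpw hp0 h htv
  refine ⟨kap_R1 w h hs 3 2, ?_⟩
  have e01 : kap w h 0 1 = kap w h 0 0 := (kap_R2 w h tb 0).symm
  have e10 : kap w h 1 0 = kap w h 0 0 := by rw [kap_R1 w h hs 1 0, e01]
  have e11 : kap w h 1 1 = kap w h 0 0 := by rw [← kap_R2 w h tb 1, e10]
  have tr0 : (∑ ρ, gd ρ * h ρ ρ) = 0 := by rw [← trace_diag h]; exact htr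
  have tb' := trace_basis w hcompC horthC htimeC h
  rw [tr0] at tb'
  linear_combination tb' - e11

lemma pnorm_eq
    (horthC : ∀ α β, (∑ μ, w α μ * w β μ) = if α = β then 1 else 0)
    (hcompC : ∀ μ ν, (∑ α, w α μ * w α ν) = if μ = ν then 1 else 0)
    (htimeC : ∀ α, w α 0 = if α = 0 then 1 else 0)
    (hT : ∀ μ, w 0 μ = if μ = 0 then 1 else 0)
    (hreal : ∀ α μ, star (w α μ) = w α μ)
    (hpw : ∀ μ, pc p μ = (p 0 : ℂ) * (w 0 μ + w 1 μ)) (hp0 : 0 < p 0)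
    (h : Matrix (Fin 4) (Fin 4) ℂ) (hmem : h ∈ Bsub p) :
    pnorm h = ((2 * (Complex.normSq (kap w h 2 2) + Complex.normSq (kap w h 2 3)) : ℝ) : ℂ) := by
  have hd := hdec w p horthC hcompC htimeC hT hpw hp0 h hmem
  obtain ⟨e32, e33⟩ := e33lem w p horthC hcompC htimeC hT hpw hp0 h hmem
  obtain ⟨hs, htr, htv⟩ := hmem
  have step1 : pnorm h = ∑ μ, ∑ ν, (gd μ * gd ν * star (h μ ν)) * h μ ν := by
    simp only [pnorm]
    refine Finset.sum_congr rfl fun μ _ => Finset.sum_congr rfl fun ν _ => ?_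
    rw [raise_apply]; simp only [star_mul', star_gd]
  have step2 : pnorm h
      = (∑ μ, ∑ ν, (gd μ * gd ν * star (h μ ν)) * (pc p μ * Ff w p h ν + pc p ν * Ff w p h μ))
        + (kap w h 2 2 *
            (∑ μ, ∑ ν, (gd μ * gd ν * star (h μ ν)) * (w 2 μ * w 2 ν - w 3 μ * w 3 ν))
        + kap w h 2 3 *
            (∑ μ, ∑ ν, (gd μ * gd ν * star (h μ ν)) * (w 2 μ * w 3 ν + w 3 μ * w 2 ν))) := by
    rw [step1]
    calc (∑ μ, ∑ ν, (gd μ * gd ν * star (h μ ν)) * h μ ν)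
        = ∑ μ, ∑ ν, ((gd μ * gd ν * star (h μ ν)) * (pc p μ * Ff w p h ν + pc p ν * Ff w p h μ)
            + (kap w h 2 2 * ((gd μ * gd ν * star (h μ ν)) * (w 2 μ * w 2 ν - w 3 μ * w 3 ν))
            + kap w h 2 3 * ((gd μ * gd ν * star (h μ ν)) * (w 2 μ * w 3 ν + w 3 μ * w 2 ν)))) :=
          Finset.sum_congr rfl fun μ _ => Finset.sum_congr rfl fun ν _ => by
            nth_rewrite 2 [hd μ ν]; ring
      _ = _ := by simp only [Finset.sum_add_distrib, ← Finset.mul_sum]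
  have hT1 : (∑ μ, ∑ ν, (gd μ * gd ν * star (h μ ν)) *
      (pc p μ * Ff w p h ν + pc p ν * Ff w p h μ)) = 0 :=
    sumB0 p h (Ff w p h) hs htv
  have k22 := kap_gd w hcompC horthC htimeC (Matrix.of fun μ ν => star (h μ ν)) 2 2
  have k33 := kap_gd w hcompC horthC htimeC (Matrix.of fun μ ν => star (h μ ν)) 3 3
  have k23 := kap_gd w hcompC horthC htimeC (Matrix.of fun μ ν => star (h μ ν)) 2 3
  have k32 := kap_gd w hcompC horthC htimeC (Matrix.of fun μ ν => star (h μ ν)) 3 2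
  rw [kap_conj w hreal h 2 2] at k22
  rw [kap_conj w hreal h 3 3] at k33
  rw [kap_conj w hreal h 2 3] at k23
  rw [kap_conj w hreal h 3 2] at k32
  simp only [Matrix.of_apply, starRingEnd_apply] at k22 k33 k23 k32
  simp (config := { decide := true }) only [if_false, neg_neg, one_mul, neg_mul] at k22 k33 k23 k32
  have hT2 : (∑ μ, ∑ ν, (gd μ * gd ν * star (h μ ν)) * (w 2 μ * w 2 ν - w 3 μ * w 3 ν))
      = star (kap w h 2 2) - star (kap w h 3 3) := by
    have expand : (∑ μ, ∑ ν, (gd μ * gd ν * star (h μ ν)) * (w 2 μ * w 2 ν - w 3 μ * w 3 ν))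
        = (∑ μ, ∑ ν, (gd μ * w 2 μ) * ((gd ν * w 2 ν) * star (h μ ν)))
          - (∑ μ, ∑ ν, (gd μ * w 3 μ) * ((gd ν * w 3 ν) * star (h μ ν))) := by
      simp only [Fin.sum_univ_four]; ring
    rw [expand]; linear_combination k22 - k33
  have hT3 : (∑ μ, ∑ ν, (gd μ * gd ν * star (h μ ν)) * (w 2 μ * w 3 ν + w 3 μ * w 2 ν))
      = star (kap w h 2 3) + star (kap w h 3 2) := by
    have expand : (∑ μ, ∑ ν, (gd μ * gd ν * star (h μ ν)) * (w 2 μ * w 3 ν + w 3 μ * w 2 ν))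
        = (∑ μ, ∑ ν, (gd μ * w 2 μ) * ((gd ν * w 3 ν) * star (h μ ν)))
          + (∑ μ, ∑ ν, (gd μ * w 3 μ) * ((gd ν * w 2 ν) * star (h μ ν))) := by
      simp only [Fin.sum_univ_four]; ring
    rw [expand]; linear_combination k23 + k32
  rw [step2, hT1, hT2, hT3, zero_add, e33, e32, star_neg]
  have m1 : kap w h 2 2 * star (kap w h 2 2)
      = ((Complex.normSq (kap w h 2 2) : ℝ) : ℂ) := by
    exact Complex.mul_conj (kap w h 2 2)
  have m2 : kap w h 2 3 * star (kap w h 2 3)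
      = ((Complex.normSq (kap w h 2 3) : ℝ) : ℂ) := by
    exact Complex.mul_conj (kap w h 2 3)
  push_cast
  linear_combination 2 * m1 + 2 * m2

lemma mem_B0_of_kap
    (horthC : ∀ α β, (∑ μ, w α μ * w β μ) = if α = β then 1 else 0)
    (hcompC : ∀ μ ν, (∑ α, w α μ * w α ν) = if μ = ν then 1 else 0)
    (htimeC : ∀ α, w α 0 = if α = 0 then 1 else 0)
    (hT : ∀ μ, w 0 μ = if μ = 0 then 1 else 0)
    (hpw : ∀ μ, pc p μ = (p 0 : ℂ) * (w 0 μ + w 1 μ)) (hp0 : 0 < p 0)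
    (h : Matrix (Fin 4) (Fin 4) ℂ) (hmem : h ∈ Bsub p)
    (h22 : kap w h 2 2 = 0) (h23 : kap w h 2 3 = 0) : h ∈ B0sub p := by
  refine ⟨Ff w p h, ?_, ?_⟩
  · have col : (∑ ρ, ∑ σ, gM ρ σ * pc p σ * Ff w p h ρ)
        = ∑ ρ, (gd ρ * pc p ρ) * Ff w p h ρ := by
      simp only [Fin.sum_univ_four]
      simp (config := { decide := true }) [gM, Matrix.diagonal_apply, gd]
    rw [col]
    have e : (∑ ρ, (gd ρ * pc p ρ) * Ff w p h ρ)
        = ∑ ρ, ((p 0 : ℂ) * (w 0 ρ - w 1 ρ)) * Ff w p h ρ :=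
      Finset.sum_congr rfl fun ρ _ => by rw [hgdp w p hT htimeC hpw ρ]
    rw [e]
    have o00 := horthC 0 0; have o11 := horthC 1 1; have o02 := horthC 0 2
    have o12 := horthC 1 2; have o03 := horthC 0 3; have o13 := horthC 1 3
    simp (config := { decide := true }) only [if_false, if_true] at o00 o11 o02 o12 o03 o13
    simp only [Ff, Fin.sum_univ_four] at *
    linear_combination
      ((p 0 : ℂ) * (kap w h 0 0 / (2 * (p 0 : ℂ)))) * (o00 - o11)
      + ((p 0 : ℂ) * (kap w h 2 0 / (p 0 : ℂ))) * (o02 - o12)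
      + ((p 0 : ℂ) * (kap w h 3 0 / (p 0 : ℂ))) * (o03 - o13)
  · intro ρ σ
    rw [hdec w p horthC hcompC htimeC hT hpw hp0 h hmem ρ σ, h22, h23]
    ring

lemma kap_zero_of_B0
    (horthC : ∀ α β, (∑ μ, w α μ * w β μ) = if α = β then 1 else 0)
    (hcompC : ∀ μ ν, (∑ α, w α μ * w α ν) = if μ = ν then 1 else 0)
    (htimeC : ∀ α, w α 0 = if α = 0 then 1 else 0)
    (hT : ∀ μ, w 0 μ = if μ = 0 then 1 else 0)
    (hreal : ∀ α μ, star (w α μ) = w α μ)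
    (hpw : ∀ μ, pc p μ = (p 0 : ℂ) * (w 0 μ + w 1 μ)) (hp0 : 0 < p 0)
    (h : Matrix (Fin 4) (Fin 4) ℂ) (hmem : h ∈ Bsub p) (hb : h ∈ B0sub p) :
    kap w h 2 2 = 0 ∧ kap w h 2 3 = 0 := by
  obtain ⟨f, hf1, hf2⟩ := hb
  have h0 : pnorm h = 0 := pform_B0 p h h f hmem.1 hmem.2.2 hf2
  rw [pnorm_eq w p horthC hcompC htimeC hT hreal hpw hp0 h hmem] at h0
  have hr := Complex.ofReal_eq_zero.mp h0
  have n22 := Complex.normSq_nonneg (kap w h 2 2)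
  have n23 := Complex.normSq_nonneg (kap w h 2 3)
  constructor
  · exact Complex.normSq_eq_zero.mp (by linarith)
  · exact Complex.normSq_eq_zero.mp (by linarith)

end

end Stmt6Aux
namespace Stmt6Aux

section

variable (w : Fin 4 → Fin 4 → ℂ) (p : Fin 4 → ℝ)

lemma kap_add (a b : Matrix (Fin 4) (Fin 4) ℂ) (α β : Fin 4) :
    kap w (a + b) α β = kap w a α β + kap w b α β := by
  simp [kap, Matrix.add_apply, mul_add, Finset.sum_add_distrib]

lemma kap_smul (c : ℂ) (a : Matrix (Fin 4) (Fin 4) ℂ) (α β : Fin 4) :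
    kap w (c • a) α β = c * kap w a α β := by
  simp only [kap, Matrix.smul_apply, smul_eq_mul, Fin.sum_univ_four]
  ring

def Lmap : ↥(Bsub p) →ₗ[ℂ] ℂ × ℂ where
  toFun x := (kap w x.1 2 2, kap w x.1 2 3)
  map_add' x y := by
    simp only [Submodule.coe_add, kap_add, Prod.mk_add_mk]
  map_smul' c x := by
    simp only [Submodule.coe_smul, kap_smul, RingHom.id_apply, Prod.smul_mk, smul_eq_mul]

def Hp : Matrix (Fin 4) (Fin 4) ℂ := Matrix.of fun μ ν => w 2 μ * w 2 ν - w 3 μ * w 3 ν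

def Hx : Matrix (Fin 4) (Fin 4) ℂ := Matrix.of fun μ ν => w 2 μ * w 3 ν + w 3 μ * w 2 ν

lemma Hp_mem
    (horthC : ∀ α β, (∑ μ, w α μ * w β μ) = if α = β then 1 else 0)
    (htimeC : ∀ α, w α 0 = if α = 0 then 1 else 0)
    (hT : ∀ μ, w 0 μ = if μ = 0 then 1 else 0)
    (hpw : ∀ μ, pc p μ = (p 0 : ℂ) * (w 0 μ + w 1 μ)) :
    Hp w ∈ Bsub p := by
  refine ⟨Matrix.IsSymm.ext_iff.mpr fun i j => by simp only [Hp, Matrix.of_apply]; ring,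
    ?_, ?_⟩
  · show (∑ ρ, ∑ σ, gM ρ σ * Hp w ρ σ) = 0
    rw [trace_diag (Hp w)]
    have m22 := hmink w horthC htimeC 2 2
    have m33 := hmink w horthC htimeC 3 3
    simp (config := { decide := true }) only [if_true, if_false, neg_mul, one_mul, neg_neg]
      at m22 m33
    simp only [Fin.sum_univ_four, Hp, Matrix.of_apply] at m22 m33 ⊢
    linear_combination m22 - m33
  · intro ρ
    rw [transv_diag p (Hp w) ρ]
    have e : (∑ σ, Hp w ρ σ * (gd σ * pc p σ))
        = ∑ σ, Hp w ρ σ * ((p 0 : ℂ) * (w 0 σ - w 1 σ)) :=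
      Finset.sum_congr rfl fun σ _ => by rw [hgdp w p hT htimeC hpw σ]
    rw [e]
    have o20 := horthC 2 0; have o21 := horthC 2 1
    have o30 := horthC 3 0; have o31 := horthC 3 1
    simp (config := { decide := true }) only [if_false] at o20 o21 o30 o31
    simp only [Fin.sum_univ_four, Hp, Matrix.of_apply] at o20 o21 o30 o31 ⊢
    linear_combination ((p 0 : ℂ) * w 2 ρ) * (o20 - o21) - ((p 0 : ℂ) * w 3 ρ) * (o30 - o31)

lemma Hx_mem
    (horthC : ∀ α β, (∑ μ, w α μ * w β μ) = if α = β then 1 else 0)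
    (htimeC : ∀ α, w α 0 = if α = 0 then 1 else 0)
    (hT : ∀ μ, w 0 μ = if μ = 0 then 1 else 0)
    (hpw : ∀ μ, pc p μ = (p 0 : ℂ) * (w 0 μ + w 1 μ)) :
    Hx w ∈ Bsub p := by
  refine ⟨Matrix.IsSymm.ext_iff.mpr fun i j => by simp only [Hx, Matrix.of_apply]; ring,
    ?_, ?_⟩
  · show (∑ ρ, ∑ σ, gM ρ σ * Hx w ρ σ) = 0
    rw [trace_diag (Hx w)]
    have m23 := hmink w horthC htimeC 2 3
    simp (config := { decide := true }) only [if_true, if_false, neg_mul, one_mul, neg_neg,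
      mul_zero, neg_zero] at m23
    simp only [Fin.sum_univ_four, Hx, Matrix.of_apply] at m23 ⊢
    linear_combination (2 : ℂ) * m23
  · intro ρ
    rw [transv_diag p (Hx w) ρ]
    have e : (∑ σ, Hx w ρ σ * (gd σ * pc p σ))
        = ∑ σ, Hx w ρ σ * ((p 0 : ℂ) * (w 0 σ - w 1 σ)) :=
      Finset.sum_congr rfl fun σ _ => by rw [hgdp w p hT htimeC hpw σ]
    rw [e]
    have o20 := horthC 2 0; have o21 := horthC 2 1
    have o30 := horthC 3 0; have o31 := horthC 3 1
    simp (config := { decide := true }) only [if_false] at o20 o21 o30 o31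
    simp only [Fin.sum_univ_four, Hx, Matrix.of_apply] at o20 o21 o30 o31 ⊢
    linear_combination ((p 0 : ℂ) * w 2 ρ) * (o30 - o31) + ((p 0 : ℂ) * w 3 ρ) * (o20 - o21)

lemma kap_Hp (horthC : ∀ α β, (∑ μ, w α μ * w β μ) = if α = β then 1 else 0) :
    kap w (Hp w) 2 2 = 1 ∧ kap w (Hp w) 2 3 = 0 := by
  have e22 : kap w (Hp w) 2 2
      = (∑ μ, w 2 μ * w 2 μ) * (∑ ν, w 2 ν * w 2 ν)
        - (∑ μ, w 2 μ * w 3 μ) * (∑ ν, w 2 ν * w 3 ν) := by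
    simp only [kap, Hp, Matrix.of_apply, Fin.sum_univ_four]; ring
  have e23 : kap w (Hp w) 2 3
      = (∑ μ, w 2 μ * w 2 μ) * (∑ ν, w 3 ν * w 2 ν)
        - (∑ μ, w 2 μ * w 3 μ) * (∑ ν, w 3 ν * w 3 ν) := by
    simp only [kap, Hp, Matrix.of_apply, Fin.sum_univ_four]; ring
  rw [e22, e23, horthC 2 2, horthC 2 3, horthC 3 2, horthC 3 3]
  norm_num
  constructor <;> simp (config := { decide := true }) only [if_false, mul_zero, zero_mul,
    sub_zero, mul_one, one_mul, zero_sub, neg_zero]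

lemma kap_Hx (horthC : ∀ α β, (∑ μ, w α μ * w β μ) = if α = β then 1 else 0) :
    kap w (Hx w) 2 2 = 0 ∧ kap w (Hx w) 2 3 = 1 := by
  have e22 : kap w (Hx w) 2 2
      = (∑ μ, w 2 μ * w 2 μ) * (∑ ν, w 2 ν * w 3 ν)
        + (∑ μ, w 2 μ * w 3 μ) * (∑ ν, w 2 ν * w 2 ν) := by
    simp only [kap, Hx, Matrix.of_apply, Fin.sum_univ_four]; ring
  have e23 : kap w (Hx w) 2 3
      = (∑ μ, w 2 μ * w 2 μ) * (∑ ν, w 3 ν * w 3 ν)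
        + (∑ μ, w 2 μ * w 3 μ) * (∑ ν, w 3 ν * w 2 ν) := by
    simp only [kap, Hx, Matrix.of_apply, Fin.sum_univ_four]; ring
  rw [e22, e23, horthC 2 2, horthC 2 3, horthC 3 2, horthC 3 3]
  constructor <;> simp (config := { decide := true }) only [if_true, if_false, mul_zero,
    zero_mul, add_zero, zero_add, mul_one, one_mul]

end

end Stmt6Aux
namespace Stmt6Aux
lemma Lmap_apply (w : Fin 4 → Fin 4 → ℂ) (p : Fin 4 → ℝ) (x : ↥(Bsub p)) :
    Lmap w p x = (kap w x.1 2 2, kap w x.1 2 3) := rfl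
end Stmt6Aux

open Stmt6Aux

/-- The space `B(p)` of symmetric Minkowski-traceless matrices transverse to a fixed
future-pointing lightlike `p`, modulo its zero-norm subspace `B₀(p)`, is a complex
vector space of dimension 2, and the sesquilinear form `(h,h') = conj(h^{μν}) h'_{μν}`
descends to a positive definite inner product on the quotient. -/
theorem statement6 (p : Fin 4 → ℝ) (hp : minkR p p = 0) (hp0 : 0 < p 0) :
    Module.finrank ℂ (↥(Bsub p) ⧸ Submodule.comap (Bsub p).subtype (B0sub p)) = 2 ∧
    (∀ a b b' : Matrix (Fin 4) (Fin 4) ℂ, a ∈ Bsub p → b ∈ Bsub p → b' ∈ Bsub p →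
      b - b' ∈ B0sub p → pform a b = pform a b') ∧
    (∀ h ∈ Bsub p, (pnorm h).im = 0 ∧ 0 ≤ (pnorm h).re) ∧
    (∀ h ∈ Bsub p, (pnorm h = 0 ↔ h ∈ B0sub p)) := by
  classical
  have hpp : p 0 ^ 2 = p 1 ^ 2 + p 2 ^ 2 + p 3 ^ 2 := by
    simp only [minkR] at hp
    nlinarith [hp]
  have hp0ne : p 0 ≠ 0 := hp0.ne'
  -- construct an orthonormal basis of ℝ⁴ adapted to p
  set T : EuclideanSpace ℝ (Fin 4) :=
    (WithLp.equiv 2 (Fin 4 → ℝ)).symm (fun μ => if μ = 0 then 1 else 0) with hTdef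
  set Sh : EuclideanSpace ℝ (Fin 4) :=
    (WithLp.equiv 2 (Fin 4 → ℝ)).symm (fun μ => if μ = 0 then 0 else p μ / p 0) with hShdef
  have iTT : (inner ℝ T T : ℝ) = 1 := by
    simp [-inner_self_eq_norm_sq_to_K, hTdef, PiLp.inner_apply, RCLike.inner_apply, WithLp.equiv_symm_apply, PiLp.toLp_apply,
      Fin.sum_univ_four]
  have iTS : (inner ℝ T Sh : ℝ) = 0 := by
    simp [hTdef, hShdef, PiLp.inner_apply, RCLike.inner_apply, WithLp.equiv_symm_apply, PiLp.toLp_apply,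
      Fin.sum_univ_four]
  have iST : (inner ℝ Sh T : ℝ) = 0 := by
    simp [hTdef, hShdef, PiLp.inner_apply, RCLike.inner_apply, WithLp.equiv_symm_apply, PiLp.toLp_apply,
      Fin.sum_univ_four]
  have iSS : (inner ℝ Sh Sh : ℝ) = 1 := by
    simp only [hShdef, PiLp.inner_apply, RCLike.inner_apply, conj_trivial,
      WithLp.equiv_symm_apply, PiLp.toLp_apply, Fin.sum_univ_four]
    simp (config := { decide := true }) only [if_false, if_true]
    field_simp
    linarith [hpp]
  have hTS : Orthonormal ℝ (Set.restrict {0, 1} ![T, Sh, 0, 0]) := by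
    rw [orthonormal_iff_ite]
    rintro ⟨i, hi⟩ ⟨j, hj⟩
    simp only [Set.mem_insert_iff, Set.mem_singleton_iff] at hi hj
    rcases hi with rfl | rfl <;> rcases hj with rfl | rfl <;>
      simp [-inner_self_eq_norm_sq_to_K, Set.restrict_apply, Set.restrict, iTT, iTS, iST, iSS, Subtype.ext_iff]
  have hcard : Module.finrank ℝ (EuclideanSpace ℝ (Fin 4)) = Fintype.card (Fin 4) := by
    simp [finrank_euclideanSpace]
  obtain ⟨b, hb⟩ := hTS.exists_orthonormalBasis_extension_of_card_eq hcard
  have hb0 : b 0 = T := by simpa using hb 0 (by simp)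
  have hb1 : b 1 = Sh := by simpa using hb 1 (by simp)
  set w : Fin 4 → Fin 4 → ℂ := fun α μ => ((b α μ : ℝ) : ℂ) with hwdef
  have horthR : ∀ α β, (∑ μ, b α μ * b β μ) = if α = β then (1:ℝ) else 0 := by
    intro α β
    have := orthonormal_iff_ite.mp b.orthonormal α β
    simpa [PiLp.inner_apply, RCLike.inner_apply, mul_comm] using this
  have horthC : ∀ α β, (∑ μ, w α μ * w β μ) = if α = β then (1:ℂ) else 0 := by
    intro α β
    have := congrArg (fun x : ℝ => (x : ℂ)) (horthR α β)
    push_cast at this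
    simpa [hwdef, Fin.sum_univ_four, apply_ite] using this
  have hcompC : ∀ μ ν, (∑ α, w α μ * w α ν) = if μ = ν then (1:ℂ) else 0 := by
    have h1 : (Matrix.of w) * (Matrix.of w)ᵀ = 1 := by
      ext α β
      simp [Matrix.mul_apply, Matrix.one_apply, horthC α β]
    have h2 := mul_eq_one_comm.mp h1
    intro μ ν
    have := congrFun (congrFun h2 μ) ν
    simpa [Matrix.mul_apply, Matrix.transpose_apply, Matrix.one_apply] using this
  have hT4 : ∀ μ, w 0 μ = if μ = 0 then (1:ℂ) else 0 := by
    intro μ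
    simp only [hwdef, hb0, hTdef, WithLp.equiv_symm_apply, PiLp.toLp_apply]
    rw [apply_ite (fun x : ℝ => (x : ℂ))]
    norm_num
  have htimeC : ∀ α, w α 0 = if α = 0 then (1:ℂ) else 0 := by
    intro α
    have key := horthR α 0
    have e : (∑ μ, b α μ * b 0 μ) = b α 0 := by
      rw [hb0]
      simp [hTdef, WithLp.equiv_symm_apply, PiLp.toLp_apply, Fin.sum_univ_four]
    rw [e] at key
    simp only [hwdef]
    rw [key, apply_ite (fun x : ℝ => (x : ℂ))]
    norm_num
  have hreal : ∀ α μ, star (w α μ) = w α μ := fun α μ => by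
    simp [hwdef, Complex.star_def, Complex.conj_ofReal]
  have hpw : ∀ μ, pc p μ = (p 0 : ℂ) * (w 0 μ + w 1 μ) := by
    intro μ
    simp only [hwdef, hb0, hb1, pc, hTdef, hShdef, WithLp.equiv_symm_apply, PiLp.toLp_apply]
    by_cases hμ : μ = 0
    · subst hμ; norm_num
    · simp only [hμ, if_false]
      have hpc : ((p 0 : ℝ) : ℂ) ≠ 0 := Complex.ofReal_ne_zero.mpr hp0ne
      push_cast
      field_simp
      ring
  refine ⟨?_, ?_, ?_, ?_⟩
  · -- dimension
    have hkerL : Submodule.comap (Bsub p).subtype (B0sub p) = LinearMap.ker (Lmap w p) := by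
      ext x
      simp only [Submodule.mem_comap, LinearMap.mem_ker, Submodule.subtype_apply]
      constructor
      · intro hx
        obtain ⟨h22, h23⟩ :=
          kap_zero_of_B0 w p horthC hcompC htimeC hT4 hreal hpw hp0 x.1 x.2 hx
        rw [Lmap_apply, h22, h23]
        rfl
      · intro hx
        have h22 : kap w x.1 2 2 = 0 := congrArg Prod.fst hx
        have h23 : kap w x.1 2 3 = 0 := congrArg Prod.snd hx
        exact mem_B0_of_kap w p horthC hcompC htimeC hT4 hpw hp0 x.1 x.2 h22 h23
    have hsurj : Function.Surjective (Lmap w p) := by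
      intro z
      refine ⟨z.1 • ⟨Hp w, Hp_mem w p horthC htimeC hT4 hpw⟩
            + z.2 • ⟨Hx w, Hx_mem w p horthC htimeC hT4 hpw⟩, ?_⟩
      obtain ⟨v1, v2⟩ := kap_Hp w horthC
      obtain ⟨u1, u2⟩ := kap_Hx w horthC
      rw [map_add, _root_.map_smul, _root_.map_smul, Lmap_apply, Lmap_apply]
      simp only [v1, v2, u1, u2, Prod.smul_mk, smul_eq_mul, Prod.mk_add_mk]
      simp
    have e1 := Submodule.quotEquivOfEq _ _ hkerL
    have e2 := (Lmap w p).quotKerEquivOfSurjective hsurj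
    rw [(e1.trans e2).finrank_eq]
    simp [Module.finrank_prod]
  · -- well-definedness of pform on the quotient
    intro a bb bb' ha _ _ hdiff
    obtain ⟨f, hf1, hf2⟩ := hdiff
    have hz : pform a (bb - bb') = 0 :=
      pform_B0 p a (bb - bb') f ha.1 ha.2.2 fun ρ σ => by
        simpa [Matrix.sub_apply] using hf2 ρ σ
    have lin : pform a (bb - bb') = pform a bb - pform a bb' := by
      simp [pform, Matrix.sub_apply, mul_sub, Finset.sum_sub_distrib]
    rw [lin] at hz
    exact sub_eq_zero.mp hz
  · -- positivity
    intro h hmem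
    rw [pnorm_eq w p horthC hcompC htimeC hT4 hreal hpw hp0 h hmem]
    constructor
    · simp
    · rw [Complex.ofReal_re]
      have n22 := Complex.normSq_nonneg (kap w h 2 2)
      have n23 := Complex.normSq_nonneg (kap w h 2 3)
      linarith
  · -- definiteness
    intro h hmem
    constructor
    · intro h0
      rw [pnorm_eq w p horthC hcompC htimeC hT4 hreal hpw hp0 h hmem] at h0
      have hr := Complex.ofReal_eq_zero.mp h0
      have n22 := Complex.normSq_nonneg (kap w h 2 2)
      have n23 := Complex.normSq_nonneg (kap w h 2 3)
      have h22 : kap w h 2 2 = 0 := Complex.normSq_eq_zero.mp (by linarith)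
      have h23 : kap w h 2 3 = 0 := Complex.normSq_eq_zero.mp (by linarith)
      exact mem_B0_of_kap w p horthC hcompC htimeC hT4 hpw hp0 h hmem h22 h23
    · intro hb0m
      obtain ⟨f, hf1, hf2⟩ := hb0m
      exact pform_B0 p h h f hmem.1 hmem.2.2 hf2
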